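/- arXiv:2109.14139 — 7 statements merged into one kernel-verified Lean document; each statement's English description precedes it below -/
import Mathlib

section
/- If F = {F_n : ℤ → R} is an admissible family of functions, then F_0 is uniquely determined: F_0(2)=F_0(−2)=1, F_0(0)=−2, and F_0(r)=0 otherwise. -/
/-- A family of functions `F : ℕ → ℤ → R` is admissible if
(A1) `F 2 0 = 1` and `F 2 r = 0` for `r ≠ 0`, and
(A2) for all `n ≥ 1` and `r ∈ ℤ`, `F n (r+1) - F n (r-1) = F (n-1) r`. -/
def Admissible {R : Type*} [CommRing R] (F : ℕ → ℤ → R) : Prop :=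
  (F 2 0 = 1 ∧ ∀ r : ℤ, r ≠ 0 → F 2 r = 0) ∧
  (∀ n : ℕ, 1 ≤ n → ∀ r : ℤ, F n (r + 1) - F n (r - 1) = F (n - 1) r)

theorem F0_determined {R : Type*} [CommRing R] (F : ℕ → ℤ → R) (hF : Admissible F) :
    F 0 2 = 1 ∧ F 0 (-2) = 1 ∧ F 0 0 = -2 ∧
      ∀ r : ℤ, r ≠ 2 → r ≠ -2 → r ≠ 0 → F 0 r = 0 := by
  obtain ⟨⟨h20, h2⟩, hA2⟩ := hF
  have h1 : ∀ r : ℤ, F 1 r = F 2 (r + 1) - F 2 (r - 1) := fun r => (hA2 2 (by norm_num) r).symm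
  have h0 : ∀ r : ℤ, F 0 r = F 1 (r + 1) - F 1 (r - 1) := fun r => (hA2 1 le_rfl r).symm
  have h1z : ∀ r : ℤ, r ≠ 1 → r ≠ -1 → F 1 r = 0 := by
    intro r h h'
    rw [h1, h2 (r + 1) (by omega), h2 (r - 1) (by omega), sub_self]
  have h11 : F 1 1 = -1 := by
    rw [h1]; norm_num [h20, h2 2 (by norm_num)]
  have h1n : F 1 (-1) = 1 := by
    rw [h1]; norm_num [h20, h2 (-2) (by norm_num)]
  refine ⟨?_, ?_, ?_, ?_⟩
  · rw [h0]; norm_num [h11, h1z 3 (by norm_num) (by norm_num)]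
  · rw [h0]; norm_num [h1n, h1z (-3) (by norm_num) (by norm_num)]
  · rw [h0]; norm_num [h11, h1n]
  · intro r hr2 hrn2 hr0
    rw [h0, h1z (r + 1) (by omega) (by omega), h1z (r - 1) (by omega) (by omega), sub_self]
end

section
/- The map Ψ sending an admissible family F to the sequence (F_{n+2}(0), F_{n+2}(1))_{n≥1} is a bijection between the set of admissible R-valued families and the set of sequences with entries in R × R. -/
section Aux
variable {R : Type*} [CommRing R]

/-- positive-side extension -/
def pPartAdm (prev : ℤ → R) (a b : R) : ℕ → R
  | 0 => a
  | 1 => b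
  | (k+2) => pPartAdm prev a b k + prev ((k : ℤ) + 1)

/-- negative-side extension -/
def nPartAdm (prev : ℤ → R) (a b : R) : ℕ → R
  | 0 => a
  | 1 => b - prev 0
  | (k+2) => nPartAdm prev a b k - prev (-((k : ℤ) + 1))

def extAdm (prev : ℤ → R) (a b : R) (r : ℤ) : R :=
  if 0 ≤ r then pPartAdm prev a b r.toNat else nPartAdm prev a b (-r).toNat

lemma extAdm_coe (prev : ℤ → R) (a b : R) (k : ℕ) :
    extAdm prev a b (k : ℤ) = pPartAdm prev a b k := by
  simp [extAdm]

lemma extAdm_neg_coe (prev : ℤ → R) (a b : R) (k : ℕ) :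
    extAdm prev a b (-(k : ℤ)) = nPartAdm prev a b k := by
  rcases Nat.eq_zero_or_pos k with rfl | hk
  · simp [extAdm, pPartAdm, nPartAdm]
  · have h : ¬ (0 : ℤ) ≤ -(k : ℤ) := by omega
    simp [extAdm, h, hk.ne']

lemma extAdm_zero (prev : ℤ → R) (a b : R) : extAdm prev a b 0 = a := by
  simpa [pPartAdm] using extAdm_coe prev a b 0

lemma extAdm_one (prev : ℤ → R) (a b : R) : extAdm prev a b 1 = b := by
  simpa [pPartAdm] using extAdm_coe prev a b 1

lemma extAdm_rec (prev : ℤ → R) (a b : R) (r : ℤ) :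
    extAdm prev a b (r + 1) - extAdm prev a b (r - 1) = prev r := by
  rcases le_or_gt 1 r with h | h
  · obtain ⟨k, rfl⟩ : ∃ k : ℕ, r = (k : ℤ) + 1 := ⟨(r - 1).toNat, by omega⟩
    have e1 : (k : ℤ) + 1 + 1 = ((k + 2 : ℕ) : ℤ) := by push_cast; ring
    have e2 : (k : ℤ) + 1 - 1 = ((k : ℕ) : ℤ) := by push_cast; ring
    rw [e1, e2, extAdm_coe, extAdm_coe]
    simp [pPartAdm]
  · rcases le_or_gt 0 r with h0 | h0
    · have : r = 0 := by omega
      subst this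
      have e1 : (0 : ℤ) + 1 = ((1 : ℕ) : ℤ) := by norm_num
      have e2 : (0 : ℤ) - 1 = -((1 : ℕ) : ℤ) := by norm_num
      rw [e1, e2, extAdm_coe, extAdm_neg_coe]
      simp [pPartAdm, nPartAdm]
    · obtain ⟨k, rfl⟩ : ∃ k : ℕ, r = -((k : ℤ) + 1) := ⟨(-r - 1).toNat, by omega⟩
      have e1 : -((k : ℤ) + 1) + 1 = -((k : ℕ) : ℤ) := by push_cast; ring
      have e2 : -((k : ℤ) + 1) - 1 = -(((k + 2 : ℕ)) : ℤ) := by push_cast; ring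
      rw [e1, e2, extAdm_neg_coe, extAdm_neg_coe]
      simp only [nPartAdm]
      ring

lemma extAdm_unique (prev : ℤ → R) (a b : R) (u : ℤ → R)
    (hu : ∀ r : ℤ, u (r + 1) - u (r - 1) = prev r)
    (h0 : u 0 = a) (h1 : u 1 = b) : u = extAdm prev a b := by
  have hpos : ∀ k : ℕ, u (k : ℤ) = pPartAdm prev a b k := by
    intro k
    induction k using Nat.strong_induction_on with
    | _ k ih =>
      match k with
      | 0 => simpa [pPartAdm] using h0
      | 1 => simpa [pPartAdm] using h1
      | (k+2) =>
        have hk := hu ((k : ℤ) + 1)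
        have e1 : (k : ℤ) + 1 + 1 = ((k + 2 : ℕ) : ℤ) := by push_cast; ring
        have e2 : (k : ℤ) + 1 - 1 = ((k : ℕ) : ℤ) := by push_cast; ring
        rw [e1, e2] at hk
        have ihk := ih k (by omega)
        simp only [pPartAdm]
        linear_combination hk + ihk
  have hneg : ∀ k : ℕ, u (-(k : ℤ)) = nPartAdm prev a b k := by
    intro k
    induction k using Nat.strong_induction_on with
    | _ k ih =>
      match k with
      | 0 => simpa [nPartAdm] using h0
      | 1 =>
        have hk := hu 0
        have e1 : (0 : ℤ) + 1 = (1 : ℤ) := by norm_num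
        have e2 : (0 : ℤ) - 1 = -((1 : ℕ) : ℤ) := by norm_num
        rw [e1, e2] at hk
        simp only [nPartAdm, Nat.cast_one]
        linear_combination -hk + h1
      | (k+2) =>
        have hk := hu (-((k : ℤ) + 1))
        have e1 : -((k : ℤ) + 1) + 1 = -((k : ℕ) : ℤ) := by push_cast; ring
        have e2 : -((k : ℤ) + 1) - 1 = -(((k + 2 : ℕ)) : ℤ) := by push_cast; ring
        rw [e1, e2] at hk
        have ihk := ih k (by omega)
        simp only [nPartAdm]
        linear_combination -hk + ihk
  funext r
  rcases le_or_gt 0 r with h | h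
  · obtain ⟨k, rfl⟩ : ∃ k : ℕ, r = (k : ℤ) := ⟨r.toNat, by omega⟩
    rw [extAdm_coe]; exact hpos k
  · obtain ⟨k, rfl⟩ : ∃ k : ℕ, r = -(k : ℤ) := ⟨(-r).toNat, by omega⟩
    rw [extAdm_neg_coe]; exact hneg k

def baseF2 : ℤ → R := fun r => if r = 0 then 1 else 0
def baseF1 : ℤ → R := fun r => if r = -1 then 1 else if r = 1 then -1 else 0
def baseF0 : ℤ → R :=
  fun r => if r = -2 then 1 else if r = 0 then -2 else if r = 2 then 1 else 0

def Hfun (g : ℕ → R × R) : ℕ → ℤ → R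
  | 0 => baseF2
  | (k+1) => extAdm (Hfun g k) (g k).1 (g k).2

def Gfun (g : ℕ → R × R) : ℕ → ℤ → R
  | 0 => baseF0
  | 1 => baseF1
  | (n+2) => Hfun g n

lemma baseF1_rec (r : ℤ) : (baseF1 (r+1) : R) - baseF1 (r-1) = baseF0 r := by
  simp only [baseF1, baseF0]
  split_ifs <;> first | omega | ring

lemma baseF2_rec (r : ℤ) : (baseF2 (r+1) : R) - baseF2 (r-1) = baseF1 r := by
  simp only [baseF1, baseF2]
  split_ifs <;> first | omega | ring

lemma Gfun_adm (g : ℕ → R × R) : Admissible (Gfun g) := by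
  constructor
  · constructor
    · simp [Gfun, Hfun, baseF2]
    · intro r hr; simp [Gfun, Hfun, baseF2, hr]
  · intro n hn r
    match n with
    | 1 => exact baseF1_rec r
    | 2 => exact baseF2_rec r
    | (m+3) =>
      show Hfun g (m+1) (r+1) - Hfun g (m+1) (r-1) = Hfun g m r
      exact extAdm_rec _ _ _ r

lemma adm_eq (F : ℕ → ℤ → R) (hF : Admissible F) :
    F = Gfun (fun n => (F (n+3) 0, F (n+3) 1)) := by
  obtain ⟨⟨h20, h2⟩, hrec⟩ := hF
  have hF2 : F 2 = baseF2 := by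
    funext r
    by_cases h : r = 0
    · subst h; simpa [baseF2] using h20
    · simp [baseF2, h, h2 r h]
  have hF1 : F 1 = baseF1 := by
    funext r
    have h := hrec 2 (by norm_num) r
    norm_num at h
    rw [← h, hF2]
    exact baseF2_rec r
  have hF0 : F 0 = baseF0 := by
    funext r
    have h := hrec 1 (by norm_num) r
    norm_num at h
    rw [← h, hF1]
    exact baseF1_rec r
  have key : ∀ k : ℕ, F (k+2) = Hfun (fun n => (F (n+3) 0, F (n+3) 1)) k := by
    intro k
    induction k with
    | zero => exact hF2
    | succ k ih =>
      show F (k+3) = extAdm (Hfun _ k) (F (k+3) 0) (F (k+3) 1)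
      rw [← ih]
      refine extAdm_unique _ _ _ _ ?_ rfl rfl
      intro r
      have h := hrec (k+3) (by omega) r
      simpa using h
  funext n
  match n with
  | 0 => exact hF0
  | 1 => exact hF1
  | (n+2) => exact key n

end Aux

/-- The map `Ψ` sending an admissible family `F` to the sequence
`(F_{n+2}(0), F_{n+2}(1))_{n ≥ 1}` (indexed here by `n : ℕ`, corresponding to `F_{n+3}`)
is a bijection `Adm(R) ≅ (R × R)^ℕ`. -/
theorem adm_bijection {R : Type*} [CommRing R] :
    Function.Bijective (fun F : {F : ℕ → ℤ → R // Admissible F} =>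
      (fun n : ℕ => (F.1 (n + 3) 0, F.1 (n + 3) 1) : ℕ → R × R)) := by
  constructor
  · rintro ⟨F, hF⟩ ⟨F', hF'⟩ h
    simp only at h
    simp only [Subtype.mk.injEq]
    calc F = Gfun (fun n => (F (n+3) 0, F (n+3) 1)) := adm_eq F hF
      _ = Gfun (fun n => (F' (n+3) 0, F' (n+3) 1)) := by rw [h]
      _ = F' := (adm_eq F' hF').symm
  · intro g
    refine ⟨⟨Gfun g, Gfun_adm g⟩, ?_⟩
    funext n
    show (Gfun g (n+3) 0, Gfun g (n+3) 1) = g n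
    show (extAdm (Hfun g n) (g n).1 (g n).2 0, extAdm (Hfun g n) (g n).1 (g n).2 1) = g n
    rw [extAdm_zero, extAdm_one]
end

section
/- With M' = M̃ + A as in the type (a) blow-down, k ∈ ℤ^s, k' = (0,k) + (1,−1,−1,0,…,0), and χ_k(x) = −(k·x + xᵀMx)/2, one has χ_{k'}(x') = χ_k(π_*(x')) + (1/2)(x_0−x_1−x_2)(x_0−x_1−x_2−1) for all x' = (x_0,…,x_s) ∈ ℤ^{s+1}, where π_*(x') = (x_1,…,x_s). In particular χ_{k'}(π*(x)) = χ_k(x) where π*(x) = (x_1+x_2, x_1, x_2, …, x_s). -/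
open Matrix

/-- The all-ones vector `u = (1,…,1) ∈ ℤ^m`. -/
def uvec (m : ℕ) : Fin m → ℤ := fun _ => 1

/-- The bilinear form `⟨x,y⟩ = xᵀ M y` associated to the matrix `M`. -/
def bform {m : ℕ} (M : Matrix (Fin m) (Fin m) ℤ) (x y : Fin m → ℤ) : ℤ :=
  x ⬝ᵥ M.mulVec y

/-- `χ_k(x) = -(k·x + ⟨x,x⟩)/2`, valued in `ℚ`. -/
def chi {m : ℕ} (M : Matrix (Fin m) (Fin m) ℤ) (k x : Fin m → ℤ) : ℚ :=
  -(((k ⬝ᵥ x + bform M x x : ℤ) : ℚ)) / 2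

/-- `M` as a matrix over `ℚ`. -/
def Mq {m : ℕ} (M : Matrix (Fin m) (Fin m) ℤ) : Matrix (Fin m) (Fin m) ℚ :=
  M.map ((↑) : ℤ → ℚ)

/-- An integer vector viewed in `ℚ^m`. -/
def vq {m : ℕ} (x : Fin m → ℤ) : Fin m → ℚ := fun i => (x i : ℚ)

/-- `Δ_k = -((k - Mu)ᵀ M⁻¹ (k - Mu) + 3s + tr M)/4 ∈ ℚ`. -/
noncomputable def Delta {m : ℕ} (M : Matrix (Fin m) (Fin m) ℤ) (k : Fin m → ℤ) : ℚ :=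
  -((vq (k - M.mulVec (uvec m)) ⬝ᵥ (Mq M)⁻¹.mulVec (vq (k - M.mulVec (uvec m)))
      + 3 * (m : ℚ) + ((Matrix.trace M : ℤ) : ℚ)) / 4)

/-- `ε_k(x) = Δ_k + 2χ_k(x) + ⟨x,u⟩`. -/
noncomputable def eps {m : ℕ} (M : Matrix (Fin m) (Fin m) ℤ) (k x : Fin m → ℤ) : ℚ :=
  Delta M k + 2 * chi M k x + (bform M x (uvec m) : ℚ)

/-- `Θ_k = (k·u - ⟨u,u⟩)/2`, computed in `ℚ`. -/
def Theta {m : ℕ} (M : Matrix (Fin m) (Fin m) ℤ) (k : Fin m → ℤ) : ℚ :=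
  ((k ⬝ᵥ uvec m - bform M (uvec m) (uvec m) : ℤ) : ℚ) / 2

/-- `θ_k(x) = Θ_k + ⟨x,u⟩`. -/
def theta {m : ℕ} (M : Matrix (Fin m) (Fin m) ℤ) (k x : Fin m → ℤ) : ℚ :=
  Theta M k + (bform M x (uvec m) : ℚ)

/-- The `(s+1)×(s+1)` block matrix `M̃` with `0` in the `(0,0)` entry and `M`
in the lower-right `s×s` block. -/
def Mtilde {s : ℕ} (M : Matrix (Fin s) (Fin s) ℤ) : Matrix (Fin (s + 1)) (Fin (s + 1)) ℤ :=
  Matrix.of fun i j =>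
    if hi : i = 0 then 0 else if hj : j = 0 then 0 else M (i.pred hi) (j.pred hj)

/-- The type (a) matrix `A`: `A₀₀ = -1`, `A₀₁ = A₀₂ = A₁₀ = A₂₀ = 1`,
`A₁₁ = A₁₂ = A₂₁ = A₂₂ = -1`, and `0` elsewhere. -/
def AmatA (s : ℕ) : Matrix (Fin (s + 1)) (Fin (s + 1)) ℤ :=
  Matrix.of fun i j =>
    if i.val = 0 ∧ j.val = 0 then -1
    else if (i.val = 0 ∧ (j.val = 1 ∨ j.val = 2)) ∨ ((i.val = 1 ∨ i.val = 2) ∧ j.val = 0) then 1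
    else if (i.val = 1 ∨ i.val = 2) ∧ (j.val = 1 ∨ j.val = 2) then -1
    else 0

/-- The type (b) matrix `A`: `A₀₀ = A₁₁ = -1`, `A₀₁ = A₁₀ = 1`, and `0` elsewhere. -/
def AmatB (s : ℕ) : Matrix (Fin (s + 1)) (Fin (s + 1)) ℤ :=
  Matrix.of fun i j =>
    if (i.val = 0 ∧ j.val = 0) ∨ (i.val = 1 ∧ j.val = 1) then -1
    else if (i.val = 0 ∧ j.val = 1) ∨ (i.val = 1 ∧ j.val = 0) then 1
    else 0

/-- The type (a) spin^c representative `k' = (0,k) + (1,-1,-1,0,…,0)`. -/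
def ka {s : ℕ} (k : Fin s → ℤ) : Fin (s + 1) → ℤ :=
  Fin.cons 0 k + fun i => if i.val = 0 then 1 else if i.val = 1 ∨ i.val = 2 then -1 else 0

/-- The type (b) spin^c representative `k' = (0,k) + (-1,1,0,…,0)`. -/
def kb {s : ℕ} (k : Fin s → ℤ) : Fin (s + 1) → ℤ :=
  Fin.cons 0 k + fun i => if i.val = 0 then -1 else if i.val = 1 then 1 else 0

/-- The projection `π_*(x₀, x₁, …, x_s) = (x₁, …, x_s)`. -/
def pstar {s : ℕ} (x' : Fin (s + 1) → ℤ) : Fin s → ℤ := fun i => x' i.succ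

-- auxiliary
def evecA (s : ℕ) : Fin (s+1) → ℤ :=
  fun i => if i.val = 0 then 1 else if i.val = 1 ∨ i.val = 2 then -1 else 0

lemma amatA_eq (s : ℕ) : AmatA s = - Matrix.vecMulVec (evecA s) (evecA s) := by
  ext i j
  simp only [AmatA, Matrix.of_apply, Matrix.neg_apply, Matrix.vecMulVec_apply, evecA]
  split_ifs <;> simp_all

lemma evecA_dot {s : ℕ} (hs : 2 ≤ s) (x : Fin (s+1) → ℤ) :
    evecA s ⬝ᵥ x = x ⟨0, by linarith⟩ - x ⟨1, by linarith⟩ - x ⟨2, by linarith⟩ := by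
  obtain ⟨t, rfl⟩ : ∃ t, s = t + 2 := ⟨s - 2, by omega⟩
  have h2 : (2 : Fin (t+2+1)) = ⟨2, by omega⟩ := by ext; simp [Fin.val_two]
  simp [dotProduct, evecA, Fin.sum_univ_succ]
  rw [← h2]
  ring

lemma quadA {s : ℕ} (x : Fin (s+1) → ℤ) :
    x ⬝ᵥ (AmatA s).mulVec x = -(evecA s ⬝ᵥ x) * (evecA s ⬝ᵥ x) := by
  have hmv : (Matrix.vecMulVec (evecA s) (evecA s)).mulVec x
      = (evecA s ⬝ᵥ x) • evecA s := by
    funext i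
    simp only [Matrix.mulVec, Matrix.vecMulVec_apply, dotProduct, Pi.smul_apply,
      smul_eq_mul, Finset.sum_mul]
    apply Finset.sum_congr rfl
    intro j _
    ring
  rw [amatA_eq, Matrix.neg_mulVec, dotProduct_neg, hmv, dotProduct_smul, smul_eq_mul,
    dotProduct_comm]
  ring

lemma quadMt {s : ℕ} (M : Matrix (Fin s) (Fin s) ℤ) (x : Fin (s+1) → ℤ) :
    x ⬝ᵥ (Mtilde M).mulVec x = pstar x ⬝ᵥ M.mulVec (pstar x) := by
  have hrow : ∀ j : Fin (s+1), (Mtilde M).mulVec x j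
      = if hj : j = 0 then 0 else M.mulVec (pstar x) (j.pred hj) := by
    intro j
    by_cases hj : j = 0
    · subst hj
      simp [Matrix.mulVec, dotProduct, Mtilde]
    · simp only [Matrix.mulVec, dotProduct, Mtilde, Matrix.of_apply, dif_neg hj]
      rw [Fin.sum_univ_succ]
      simp [pstar, Fin.succ_ne_zero]
  simp only [dotProduct, hrow]
  rw [Fin.sum_univ_succ]
  simp [pstar, Fin.succ_ne_zero]

lemma ka_dot {s : ℕ} (k : Fin s → ℤ) (x : Fin (s+1) → ℤ) :
    ka k ⬝ᵥ x = k ⬝ᵥ pstar x + evecA s ⬝ᵥ x := by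
  have : ka k = Fin.cons 0 k + evecA s := rfl
  rw [this, add_dotProduct]
  congr 1
  rw [dotProduct, Fin.sum_univ_succ]
  simp [pstar, dotProduct]


/-- For the type (a) blow-down with `k' = (0,k) + (1,-1,-1,0,…,0)`:
`χ_{k'}(x') = χ_k(π_*(x')) + (1/2)(x₀-x₁-x₂)(x₀-x₁-x₂-1)`, and in particular
`χ_{k'}(π^*(x)) = χ_k(x)` where `π^*(x) = (x₁+x₂, x₁, x₂, …, x_s)`. -/
theorem chi_type_a (s : ℕ) (hs : 2 ≤ s) (M : Matrix (Fin s) (Fin s) ℤ)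
    (hsymm : M.IsSymm) (k : Fin s → ℤ) :
    (∀ x' : Fin (s + 1) → ℤ,
      chi (Mtilde M + AmatA s) (ka k) x' =
        chi M k (pstar x') +
          (((x' ⟨0, by omega⟩ - x' ⟨1, by omega⟩ - x' ⟨2, by omega⟩) *
            (x' ⟨0, by omega⟩ - x' ⟨1, by omega⟩ - x' ⟨2, by omega⟩ - 1) : ℤ) : ℚ) / 2) ∧
    (∀ x : Fin s → ℤ,
      chi (Mtilde M + AmatA s) (ka k) (Fin.cons (x ⟨0, by omega⟩ + x ⟨1, by omega⟩) x) =
        chi M k x) := by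
  have main : ∀ x' : Fin (s + 1) → ℤ,
      chi (Mtilde M + AmatA s) (ka k) x' =
        chi M k (pstar x') +
          (((x' ⟨0, by omega⟩ - x' ⟨1, by omega⟩ - x' ⟨2, by omega⟩) *
            (x' ⟨0, by omega⟩ - x' ⟨1, by omega⟩ - x' ⟨2, by omega⟩ - 1) : ℤ) : ℚ) / 2 := by
    intro x'
    have hb : bform (Mtilde M + AmatA s) x' x'
        = bform M (pstar x') (pstar x')
          - (x' ⟨0, by omega⟩ - x' ⟨1, by omega⟩ - x' ⟨2, by omega⟩)
            * (x' ⟨0, by omega⟩ - x' ⟨1, by omega⟩ - x' ⟨2, by omega⟩) := by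
      unfold bform
      rw [Matrix.add_mulVec, dotProduct_add, quadMt, quadA, evecA_dot hs]
      ring
    have hk : ka k ⬝ᵥ x' = k ⬝ᵥ pstar x'
        + (x' ⟨0, by omega⟩ - x' ⟨1, by omega⟩ - x' ⟨2, by omega⟩) := by
      rw [ka_dot, evecA_dot hs]
    unfold chi
    rw [hb, hk]
    push_cast
    ring
  refine ⟨main, fun x => ?_⟩
  rw [main (Fin.cons (x ⟨0, by omega⟩ + x ⟨1, by omega⟩) x)]
  have h1 : (⟨1, by omega⟩ : Fin (s+1)) = Fin.succ ⟨0, by omega⟩ := rfl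
  have h2 : (⟨2, by omega⟩ : Fin (s+1)) = Fin.succ ⟨1, by omega⟩ := rfl
  have hp : pstar (Fin.cons (x ⟨0, by omega⟩ + x ⟨1, by omega⟩) x) = x := by
    funext i; simp [pstar]
  rw [hp, h1, h2, Fin.cons_succ, Fin.cons_succ]
  have h0 : (⟨0, by omega⟩ : Fin (s+1)) = 0 := rfl
  rw [h0, Fin.cons_zero]
  simp
end

section
/- Consider the type (b) move: M' = M̃ + A where M̃ has 0 in the (0,0) entry, M in the lower-right s×s block, and A has A_{00}=A_{11}=−1, A_{01}=A_{10}=1, and 0 elsewhere. Let k ∈ ℤ^s and k' = (0,k) + (−1,1,0,…,0). Then χ_{k'}(x') = χ_k(π_*(x')) + (1/2)(x_0−x_1)(x_0−x_1+1) for all x' ∈ ℤ^{s+1}, where π_*(x') = (x_1,…,x_s). In particular χ_{k'}∘π* = χ_k = χ_{k'}∘ρ*, where π*(x) = (x_1, x_1, x_2,…, x_s) and ρ*(x) = (x_1−1, x_1, x_2,…, x_s). -/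
open Matrix

lemma bformM' {s : ℕ} (M : Matrix (Fin s) (Fin s) ℤ) (x' : Fin (s+1) → ℤ) :
    bform (Mtilde M) x' x' = bform M (pstar x') (pstar x') := by
  simp [bform, Mtilde, Matrix.mulVec, dotProduct, Fin.sum_univ_succ,
    Fin.succ_ne_zero, pstar]

lemma bformA' {t : ℕ} (x' : Fin (t+1+1) → ℤ) :
    bform (AmatB (t+1)) x' x' = -(x' 0 - x' 1)^2 := by
  simp [bform, AmatB, Matrix.mulVec, dotProduct, Fin.sum_univ_succ]
  ring

lemma kbdot' {t : ℕ} (k : Fin (t+1) → ℤ) (x' : Fin (t+1+1) → ℤ) :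
    kb k ⬝ᵥ x' = k ⬝ᵥ pstar x' + (x' 1 - x' 0) := by
  simp [kb, pstar, dotProduct, Fin.sum_univ_succ, add_mul]
  ring

set_option maxHeartbeats 1000000 in
/-- For the type (b) move with `k' = (0,k) + (-1,1,0,…,0)`:
`χ_{k'}(x') = χ_k(π_*(x')) + (1/2)(x₀-x₁)(x₀-x₁+1)`, and in particular
`χ_{k'} ∘ π^* = χ_k = χ_{k'} ∘ ρ^*` where `π^*(x) = (x₁, x₁, x₂, …, x_s)` and
`ρ^*(x) = (x₁-1, x₁, x₂, …, x_s)`. -/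
theorem chi_type_b (s : ℕ) (hs : 1 ≤ s) (M : Matrix (Fin s) (Fin s) ℤ)
    (hsymm : M.IsSymm) (k : Fin s → ℤ) :
    (∀ x' : Fin (s + 1) → ℤ,
      chi (Mtilde M + AmatB s) (kb k) x' =
        chi M k (pstar x') +
          (((x' ⟨0, by omega⟩ - x' ⟨1, by omega⟩) *
            (x' ⟨0, by omega⟩ - x' ⟨1, by omega⟩ + 1) : ℤ) : ℚ) / 2) ∧
    (∀ x : Fin s → ℤ,
      chi (Mtilde M + AmatB s) (kb k) (Fin.cons (x ⟨0, by omega⟩) x) = chi M k x ∧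
      chi (Mtilde M + AmatB s) (kb k) (Fin.cons (x ⟨0, by omega⟩ - 1) x) = chi M k x) := by
  obtain ⟨t, rfl⟩ : ∃ t, s = t + 1 := ⟨s - 1, by omega⟩
  have main : ∀ x' : Fin (t + 1 + 1) → ℤ,
      chi (Mtilde M + AmatB (t+1)) (kb k) x' =
        chi M k (pstar x') + (((x' 0 - x' 1) * (x' 0 - x' 1 + 1) : ℤ) : ℚ) / 2 := by
    intro x'
    have hb : bform (Mtilde M + AmatB (t+1)) x' x' =
        bform M (pstar x') (pstar x') + -(x' 0 - x' 1)^2 := by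
      rw [← bformM' M x', ← bformA' x']
      simp [bform, Matrix.add_mulVec, dotProduct_add]
    simp only [chi, hb, kbdot']
    push_cast
    ring
  have h01 : (⟨0, by omega⟩ : Fin (t+1+1)) = 0 := Fin.mk_zero
  have h11 : (⟨1, by omega⟩ : Fin (t+1+1)) = 1 := Fin.mk_one
  refine ⟨fun x' => by rw [main x', h01, h11], fun x => ?_⟩
  have hp : ∀ a : ℤ, pstar (Fin.cons a x : Fin (t+1+1) → ℤ) = x := by
    intro a; funext i; simp [pstar]
  have h0 : ∀ a : ℤ, (Fin.cons a x : Fin (t+1+1) → ℤ) 0 = a := by intro a; simp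
  have hx1 : ∀ a : ℤ, (Fin.cons a x : Fin (t+1+1) → ℤ) 1 = x ⟨0, by omega⟩ := by
    intro a
    have e : (1 : Fin (t+1+1)) = Fin.succ ⟨0, by omega⟩ := by ext; simp
    rw [e]
    simp
  constructor <;>
  · rw [main, hp, h0, hx1]
    push_cast
    ring
end

section
/- Under the type (b) move, Δ_k = Δ_{k'}, where Δ_k = −((k−Mu)ᵀM^{−1}(k−Mu) + 3s + tr(M))/4 and Δ_{k'} = −((k'−M'u')ᵀ(M')^{−1}(k'−M'u') + 3(s+1) + tr(M'))/4, with u, u' the all-ones vectors of sizes s, s+1. Here M and M' are assumed invertible. -/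
open Matrix

section auxB

lemma inv_mulVec_eq' {n : ℕ} (A : Matrix (Fin n) (Fin n) ℚ) (h : IsUnit A.det)
    {x b : Fin n → ℚ} (hx : A.mulVec x = b) : A⁻¹.mulVec b = x := by
  rw [← hx, Matrix.mulVec_mulVec, Matrix.nonsing_inv_mul A h, Matrix.one_mulVec]

lemma sum_ite_zero' {s : ℕ} [NeZero s] {α : Type*} [AddCommMonoid α] (f : Fin s → α) :
    (∑ j : Fin s, if j.val = 0 then f j else 0) = f 0 := by
  rw [Finset.sum_eq_single (0 : Fin s)]
  · simp
  · intro j _ hj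
    rw [if_neg]
    exact fun h => hj (Fin.ext (by simp [h]))
  · simp

variable {s : ℕ} (M : Matrix (Fin s) (Fin s) ℤ)

lemma MpB00 : (Mtilde M + AmatB s) 0 0 = -1 := by
  simp [Mtilde, AmatB]

lemma MpB0s (j : Fin s) :
    (Mtilde M + AmatB s) 0 j.succ = if j.val = 0 then 1 else 0 := by
  have : j.succ.val = j.val + 1 := rfl
  simp [Mtilde, AmatB, this]

lemma MpBs0 (i : Fin s) :
    (Mtilde M + AmatB s) i.succ 0 = if i.val = 0 then 1 else 0 := by
  have : i.succ.val = i.val + 1 := rfl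
  simp [Mtilde, AmatB, this, Fin.succ_ne_zero]

lemma MpBss (i j : Fin s) :
    (Mtilde M + AmatB s) i.succ j.succ
      = M i j + if i.val = 0 ∧ j.val = 0 then -1 else 0 := by
  have hi : i.succ.val = i.val + 1 := rfl
  have hj : j.succ.val = j.val + 1 := rfl
  simp [Mtilde, AmatB, hi, hj, Fin.succ_ne_zero, Fin.pred_succ]

end auxB
/-- Under the type (b) move, `Δ_k = Δ_{k'}` (with `M` and `M' = M̃ + A` assumed
invertible over `ℚ`). -/
theorem Delta_type_b (s : ℕ) (hs : 1 ≤ s) (M : Matrix (Fin s) (Fin s) ℤ)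
    (hsymm : M.IsSymm) (hinv : IsUnit (Mq M).det)
    (hinv' : IsUnit (Mq (Mtilde M + AmatB s)).det) (k : Fin s → ℤ) :
    Delta M k = Delta (Mtilde M + AmatB s) (kb k) := by
  haveI : NeZero s := ⟨by omega⟩
  have h0v : ((0 : Fin s) : ℕ) = 0 := rfl
  simp only [Delta]
  set M' := Mtilde M + AmatB s with hM'
  set v : Fin s → ℤ := k - M.mulVec (uvec s) with hvdef
  set y : Fin s → ℚ := (Mq M)⁻¹.mulVec (vq v) with hy
  have hMy : (Mq M).mulVec y = vq v := by
    rw [hy, Matrix.mulVec_mulVec, Matrix.mul_nonsing_inv _ hinv, Matrix.one_mulVec]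
  set v' : Fin (s + 1) → ℤ := kb k - M'.mulVec (uvec (s + 1)) with hv'def
  have hv'0 : v' 0 = -1 := by
    simp only [hv'def, Pi.sub_apply, kb, Pi.add_apply, Fin.cons_zero]
    have : M'.mulVec (uvec (s + 1)) 0 = 0 := by
      simp only [Matrix.mulVec, dotProduct, uvec, mul_one, Fin.sum_univ_succ, hM',
        MpB00, MpB0s]
      rw [sum_ite_zero' (fun _ : Fin s => (1 : ℤ))]
      ring
    rw [this]; norm_num
  have hv's : ∀ i : Fin s, v' i.succ = v i + (if i.val = 0 then 1 else 0) := by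
    intro i
    have hk : kb k i.succ = k i + (if i.val = 0 then 1 else 0) := by
      have h1 : i.succ.val = i.val + 1 := rfl
      simp [kb, h1, Fin.cons_succ]
    have hm : M'.mulVec (uvec (s + 1)) i.succ = M.mulVec (uvec s) i := by
      simp only [Matrix.mulVec, dotProduct, uvec, mul_one, Fin.sum_univ_succ, hM',
        MpBs0, MpBss]
      by_cases hi : i.val = 0 <;>
        simp [hi, Finset.sum_add_distrib, sum_ite_zero' (fun _ : Fin s => (-1 : ℤ))]
    simp only [hv'def, Pi.sub_apply, hk, hm, hvdef]
    ring
  set w : Fin (s + 1) → ℚ := Fin.cons (1 + y 0) y with hw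
  have hMqy : ∀ i, (∑ j, (M i j : ℚ) * y j) = vq v i := by
    intro i
    have := congrFun hMy i
    simpa [Mq, Matrix.mulVec, dotProduct, Matrix.map_apply] using this
  have hMw : (Mq M').mulVec w = vq v' := by
    funext i
    refine Fin.cases ?_ ?_ i
    · have : ∀ j : Fin s, ((Mq M') 0 j.succ : ℚ) * w j.succ
          = (if j.val = 0 then y j else 0) := by
        intro j
        simp only [Mq, Matrix.map_apply, hM', MpB0s, hw, Fin.cons_succ]
        split <;> simp
      simp only [Matrix.mulVec, dotProduct, Fin.sum_univ_succ, this,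
        sum_ite_zero' (fun j : Fin s => y j)]
      simp only [Mq, Matrix.map_apply, hM', MpB00, hw, Fin.cons_zero, vq, hv'0]
      push_cast
      ring
    · intro i
      have hrow : ∀ j : Fin s, ((Mq M') i.succ j.succ : ℚ) * w j.succ
          = (M i j : ℚ) * y j + (if i.val = 0 then (if j.val = 0 then -y j else 0) else 0) := by
        intro j
        simp only [Mq, Matrix.map_apply, hM', MpBss, hw, Fin.cons_succ]
        push_cast
        by_cases hi : i.val = 0 <;> by_cases hj : j.val = 0 <;> simp [hi, hj] <;> ring
      simp only [Matrix.mulVec, dotProduct, Fin.sum_univ_succ, hrow,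
        Finset.sum_add_distrib, hMqy]
      simp only [Mq, Matrix.map_apply, hM', MpBs0, hw, Fin.cons_zero, vq, hv's]
      by_cases hi : i.val = 0 <;>
        simp [hi, sum_ite_zero' (fun j : Fin s => -y j)] <;> push_cast <;> ring
  have hinvw : (Mq M')⁻¹.mulVec (vq v') = w := inv_mulVec_eq' _ hinv' hMw
  have hdot : vq v' ⬝ᵥ w = -1 + vq v ⬝ᵥ y := by
    simp only [dotProduct, Fin.sum_univ_succ, hw, Fin.cons_zero, Fin.cons_succ,
      vq, hv'0, hv's]
    push_cast
    rw [show ∀ a b : ℚ, a + b = a + b from fun _ _ => rfl]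
    have : (∑ i : Fin s, ((v i : ℚ) + (if i.val = 0 then 1 else 0)) * y i)
        = (∑ i : Fin s, (v i : ℚ) * y i) + y 0 := by
      rw [← sum_ite_zero' (fun i : Fin s => y i), ← Finset.sum_add_distrib]
      refine Finset.sum_congr rfl fun i _ => ?_
      by_cases hi : i.val = 0 <;> simp [hi] <;> ring
    rw [this]
    ring
  have htr : Matrix.trace M' = Matrix.trace M - 2 := by
    simp only [Matrix.trace, Matrix.diag, Fin.sum_univ_succ, hM', MpB00, MpBss,
      Finset.sum_add_distrib]
    have h1 : (∑ x : Fin s, if (x : ℕ) = 0 ∧ (x : ℕ) = 0 then (-1 : ℤ) else 0) = -1 := by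
      have h2 : (∑ x : Fin s, if (x : ℕ) = 0 ∧ (x : ℕ) = 0 then (-1 : ℤ) else 0)
          = ∑ x : Fin s, if (x : ℕ) = 0 then (-1 : ℤ) else 0 :=
        Finset.sum_congr rfl fun i _ => by simp [and_self]
      rw [h2, sum_ite_zero' (fun _ : Fin s => (-1 : ℤ))]
    rw [h1]
    ring
  rw [hinvw, hdot, htr]
  push_cast
  ring
end

section
/- Under the type (a) move, Θ_k = Θ_{k'}, where Θ_k = (k·u − uᵀMu)/2, Θ_{k'} = (k'·u' − (u')ᵀM'u')/2, u and u' are all-ones vectors of sizes s and s+1, M' = M̃ + A is the type (a) matrix, and k' = (0,k) + (1,−1,−1,0,…,0). -/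
open Matrix

/-- Under the type (a) move, `Θ_k = Θ_{k'}` where `M' = M̃ + A` and
`k' = (0,k) + (1,-1,-1,0,…,0)`. -/
theorem Theta_type_a (s : ℕ) (hs : 2 ≤ s) (M : Matrix (Fin s) (Fin s) ℤ)
    (hsymm : M.IsSymm) (k : Fin s → ℤ) :
    Theta M k = Theta (Mtilde M + AmatA s) (ka k) := by
  obtain ⟨t, rfl⟩ : ∃ t, s = t + 2 := ⟨s - 2, by omega⟩
  have hb : ∀ (m : ℕ) (N : Matrix (Fin m) (Fin m) ℤ),
      bform N (uvec m) (uvec m) = ∑ i, ∑ j, N i j := by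
    intro m N
    simp [bform, dotProduct, mulVec, uvec]
  have hMt : (∑ i, ∑ j, (Mtilde M) i j) = ∑ i, ∑ j, M i j := by
    rw [Fin.sum_univ_succ]
    simp [Mtilde, Fin.sum_univ_succ (n := t + 2), Fin.succ_ne_zero]
  have hA : (∑ i, ∑ j, AmatA (t + 2) i j) = -1 := by
    simp [AmatA, Fin.sum_univ_succ, Fin.val_succ]
  have hka : (ka k ⬝ᵥ uvec (t + 2 + 1)) = (k ⬝ᵥ uvec (t + 2)) - 1 := by
    simp [ka, dotProduct, uvec, Fin.sum_univ_succ, Fin.val_succ, Fin.cons]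
    ring
  have hsum : bform (Mtilde M + AmatA (t + 2)) (uvec (t + 2 + 1)) (uvec (t + 2 + 1))
      = bform M (uvec (t + 2)) (uvec (t + 2)) - 1 := by
    rw [hb, hb]
    simp only [Matrix.add_apply, Finset.sum_add_distrib, hMt, hA]
    ring
  simp only [Theta, hsum, hka]
  push_cast
  ring
end

section
/- Let M be a negative definite symmetric integer s×s matrix, k ∈ ℤ^s, u = (1,…,1), and k' = −k + 2Mu. Then: (1) Δ_{k'} = Δ_k where Δ_k = −((k−Mu)ᵀM^{−1}(k−Mu) + 3s + tr(M))/4; (2) 2χ_k(x) = 2χ_{k'}(−x) − 2⟨x,u⟩ for all x ∈ ℤ^s, where χ_k(x) = −(k·x + ⟨x,x⟩)/2; and (3) Θ_{k'} = −Θ_k where Θ_k = (k·u − ⟨u,u⟩)/2. Consequently ε_{k'}(−x) = ε_k(x) and θ_{k'}(−x) = −θ_k(x), where ε_k(x) = Δ_k + 2χ_k(x) + ⟨x,u⟩ and θ_k(x) = Θ_k + ⟨x,u⟩. -/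
open Matrix

/-- Spin^c conjugation: with `M` negative definite symmetric and `k' = -k + 2Mu`,
one has (1) `Δ_{k'} = Δ_k`, (2) `2χ_k(x) = 2χ_{k'}(-x) - 2⟨x,u⟩`,
(3) `Θ_{k'} = -Θ_k`, and consequently `ε_{k'}(-x) = ε_k(x)` and
`θ_{k'}(-x) = -θ_k(x)`. -/
theorem spinc_conjugation (s : ℕ) (M : Matrix (Fin s) (Fin s) ℤ) (hsymm : M.IsSymm)
    (hneg : ∀ x : Fin s → ℤ, x ≠ 0 → bform M x x < 0) (k : Fin s → ℤ) :
    Delta M (-k + 2 • M.mulVec (uvec s)) = Delta M k ∧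
    (∀ x : Fin s → ℤ,
      2 * chi M k x = 2 * chi M (-k + 2 • M.mulVec (uvec s)) (-x)
        - 2 * (bform M x (uvec s) : ℚ)) ∧
    Theta M (-k + 2 • M.mulVec (uvec s)) = -Theta M k ∧
    (∀ x : Fin s → ℤ, eps M (-k + 2 • M.mulVec (uvec s)) (-x) = eps M k x) ∧
    (∀ x : Fin s → ℤ, theta M (-k + 2 • M.mulVec (uvec s)) (-x) = -theta M k x) := by
  set u := uvec s with hu
  set v := M.mulVec u with hmv
  have hv : (-k + 2 • v) - v = -(k - v) := by
    funext i; simp [Pi.add_apply, Pi.sub_apply, Pi.neg_apply, two_smul]; ring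
  have hΔ : Delta M (-k + 2 • v) = Delta M k := by
    unfold Delta
    rw [hv]
    have : vq (-(k - v)) = -vq (k - v) := by funext i; simp [vq]
    rw [this]
    simp [Matrix.mulVec_neg, dotProduct_neg, neg_dotProduct]
    rfl
  have hchi : ∀ x : Fin s → ℤ,
      2 * chi M k x = 2 * chi M (-k + 2 • v) (-x) - 2 * (bform M x u : ℚ) := by
    intro x
    unfold chi bform
    have h1 : (-k + 2 • v) ⬝ᵥ (-x) = k ⬝ᵥ x - 2 * (x ⬝ᵥ v) := by
      simp [add_dotProduct, neg_dotProduct, smul_dotProduct, dotProduct_neg, two_smul,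
        dotProduct_comm v x]
      ring
    have h2 : (-x) ⬝ᵥ M.mulVec (-x) = x ⬝ᵥ M.mulVec x := by
      simp [Matrix.mulVec_neg, neg_dotProduct, dotProduct_neg]
    rw [h1, h2]
    push_cast
    ring
  have hΘ : Theta M (-k + 2 • v) = -Theta M k := by
    unfold Theta bform
    have h1 : (-k + 2 • v) ⬝ᵥ u = -(k ⬝ᵥ u) + 2 * (u ⬝ᵥ v) := by
      simp [add_dotProduct, neg_dotProduct, smul_dotProduct, two_smul, dotProduct_comm v u]; ring
    rw [h1]
    push_cast
    ring
  refine ⟨hΔ, hchi, hΘ, ?_, ?_⟩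
  · intro x
    unfold eps
    have h1 := hchi x
    have h2 : (bform M (-x) u : ℚ) = -(bform M x u : ℚ) := by
      unfold bform; simp [neg_dotProduct]
    rw [hΔ, h2]
    linarith [h1]
  · intro x
    unfold theta
    have h2 : (bform M (-x) u : ℚ) = -(bform M x u : ℚ) := by
      unfold bform; simp [neg_dotProduct]
    rw [hΘ, h2]
    ring
end
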